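/- Let k ≥ 1 and let w = (01)^k(10)^k be the binary string of length 4k. For any integer p with 1 ≤ p < 2k, the number of pairs (i,j) such that w[i..j] is a run of w with minimal period at least p is at least k − ⌊p/2⌋. -/
import Mathlib


/-- `p` is a period of the substring `t[i..j]` of the 1-indexed string `t`:
`1 ≤ p ≤ |t[i..j]| = j - i + 1`, and `t[k] = t[k + p]` whenever both positions
lie in `[i..j]` (vacuously, the length is always a period). -/
def IsPeriodOf {α : Type*} (t : ℕ → α) (i j p : ℕ) : Prop :=
  1 ≤ p ∧ p ≤ j + 1 - i ∧ ∀ k, i ≤ k → k + p ≤ j → t (k + p) = t k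

/-- The minimal period of the substring `t[i..j]`. -/
noncomputable def minPeriod {α : Type*} (t : ℕ → α) (i j : ℕ) : ℕ :=
  sInf {p | IsPeriodOf t i j p}

/-- `t[i..j]` is a run of the string `t[1..n]`: its exponent is at least `2`
(i.e. `j - i + 1 ≥ 2 · minPeriod`), and the extensions `t[i-1..j]` (if `i > 1`)
and `t[i..j+1]` (if `j < n`) have strictly larger minimal periods. -/
def IsRun {α : Type*} (t : ℕ → α) (n i j : ℕ) : Prop :=
  1 ≤ i ∧ i ≤ j ∧ j ≤ n ∧
  2 * minPeriod t i j ≤ j + 1 - i ∧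
  (1 < i → minPeriod t i j < minPeriod t (i - 1) j) ∧
  (j < n → minPeriod t i j < minPeriod t i (j + 1))

/-- The string `(01)^k (10)^k` of length `4k` over the ordered alphabet
`{0, 1} ⊆ ℕ`, indexed from `1`: positions `1..2k` alternate `0,1,0,1,…` and
positions `2k+1..4k` alternate `1,0,1,0,…`. -/
def zeroOneWord (k : ℕ) : ℕ → ℕ := fun m =>
  if m ≤ 2 * k then (if m % 2 = 1 then 0 else 1)
  else (if m % 2 = 1 then 1 else 0)

private lemma w_period (k m : ℕ) (hm1 : 1 ≤ m) (hmk : m ≤ k) :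
    IsPeriodOf (zeroOneWord k) (2*m) (4*k+1-2*m) (2*(k-m)+1) := by
  refine ⟨by omega, by omega, fun x hx hxp => ?_⟩
  simp only [zeroOneWord]
  split_ifs <;> omega

/-- No `p' < 2(k-m)+1` satisfies the period identity on any interval
containing `[2m, 4k+1-2m]`. -/
private lemma w_no_small (k m p' : ℕ) (hm1 : 1 ≤ m) (hmk : m ≤ k)
    (h1 : 1 ≤ p') (h2 : p' < 2*(k-m)+1)
    (h3 : ∀ x, 2*m ≤ x → x + p' ≤ 4*k+1-2*m → zeroOneWord k (x+p') = zeroOneWord k x) :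
    False := by
  by_cases hpar : p' % 2 = 0
  · have := h3 (2*k) (by omega) (by omega)
    simp only [zeroOneWord] at this
    split_ifs at this <;> omega
  · have := h3 (2*m) (by omega) (by omega)
    simp only [zeroOneWord] at this
    split_ifs at this <;> omega

private lemma w_minPeriod (k m : ℕ) (hm1 : 1 ≤ m) (hmk : m ≤ k) :
    minPeriod (zeroOneWord k) (2*m) (4*k+1-2*m) = 2*(k-m)+1 := by
  have hq := w_period k m hm1 hmk
  have hne : {p | IsPeriodOf (zeroOneWord k) (2*m) (4*k+1-2*m) p}.Nonempty := ⟨_, hq⟩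
  have hmem := Nat.sInf_mem hne
  refine le_antisymm (Nat.sInf_le hq) ?_
  by_contra hlt
  push_neg at hlt
  exact w_no_small k m _ hm1 hmk hmem.1 hlt (fun x hx hxp => hmem.2.2 x hx hxp)

private lemma w_left (k m : ℕ) (hm1 : 1 ≤ m) (hmk : m ≤ k) :
    2*(k-m)+1 < minPeriod (zeroOneWord k) (2*m-1) (4*k+1-2*m) := by
  have hne : {p | IsPeriodOf (zeroOneWord k) (2*m-1) (4*k+1-2*m) p}.Nonempty := by
    refine ⟨4*k+3-4*m, by omega, by omega, fun x hx hxp => absurd hxp (by omega)⟩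
  simp only [minPeriod]
  set q' := sInf {p | IsPeriodOf (zeroOneWord k) (2*m-1) (4*k+1-2*m) p} with hq'
  have hmem : q' ∈ {p | IsPeriodOf (zeroOneWord k) (2*m-1) (4*k+1-2*m) p} := Nat.sInf_mem hne
  by_contra h
  push_neg at h
  rcases lt_or_eq_of_le h with h' | h'
  · exact w_no_small k m _ hm1 hmk hmem.1 h'
      (fun x hx hxp => hmem.2.2 x (by omega) hxp)
  · have := hmem.2.2 (2*m-1) le_rfl (by omega)
    rw [h'] at this
    simp only [zeroOneWord] at this
    split_ifs at this <;> omega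

private lemma w_right (k m : ℕ) (hm1 : 1 ≤ m) (hmk : m ≤ k) :
    2*(k-m)+1 < minPeriod (zeroOneWord k) (2*m) (4*k+2-2*m) := by
  have hne : {p | IsPeriodOf (zeroOneWord k) (2*m) (4*k+2-2*m) p}.Nonempty := by
    refine ⟨4*k+3-4*m, by omega, by omega, fun x hx hxp => absurd hxp (by omega)⟩
  simp only [minPeriod]
  set q' := sInf {p | IsPeriodOf (zeroOneWord k) (2*m) (4*k+2-2*m) p} with hq'
  have hmem : q' ∈ {p | IsPeriodOf (zeroOneWord k) (2*m) (4*k+2-2*m) p} := Nat.sInf_mem hne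
  by_contra h
  push_neg at h
  rcases lt_or_eq_of_le h with h' | h'
  · exact w_no_small k m _ hm1 hmk hmem.1 h'
      (fun x hx hxp => hmem.2.2 x hx (by omega))
  · have := hmem.2.2 (2*k+1) (by omega) (by omega)
    rw [h'] at this
    simp only [zeroOneWord] at this
    split_ifs at this <;> omega

private lemma w_isRun (k m : ℕ) (hm1 : 1 ≤ m) (hmk : m ≤ k) :
    IsRun (zeroOneWord k) (4*k) (2*m) (4*k+1-2*m) := by
  refine ⟨by omega, by omega, by omega, ?_, ?_, ?_⟩
  · rw [w_minPeriod k m hm1 hmk]; omega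
  · intro _
    rw [w_minPeriod k m hm1 hmk]
    exact w_left k m hm1 hmk
  · intro _
    rw [w_minPeriod k m hm1 hmk]
    have h : 4*k+1-2*m+1 = 4*k+2-2*m := by omega
    rw [h]
    exact w_right k m hm1 hmk

/-- In `w = (01)^k (10)^k`, for any `1 ≤ p < 2k` the number of runs with
minimal period at least `p` is at least `k - ⌊p/2⌋`. -/
theorem zeroOneWord_many_runs (k p : ℕ) (hk : 1 ≤ k) (hp : 1 ≤ p)
    (hpk : p < 2 * k) :
    k - p / 2 ≤
      {ij : ℕ × ℕ | IsRun (zeroOneWord k) (4 * k) ij.1 ij.2 ∧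
        p ≤ minPeriod (zeroOneWord k) ij.1 ij.2}.ncard := by
  set S := {ij : ℕ × ℕ | IsRun (zeroOneWord k) (4 * k) ij.1 ij.2 ∧
        p ≤ minPeriod (zeroOneWord k) ij.1 ij.2} with hS
  have hfin : S.Finite := by
    apply Set.Finite.subset ((Set.finite_Icc 1 (4*k)).prod (Set.finite_Icc 1 (4*k)))
    rintro ⟨i, j⟩ ⟨⟨h1, h2, h3, _⟩, _⟩
    exact ⟨Set.mem_Icc.2 ⟨h1, by omega⟩, Set.mem_Icc.2 ⟨by omega, h3⟩⟩
  have hsub : (fun m => (2*m, 4*k+1-2*m)) '' (Set.Icc 1 (k - p/2)) ⊆ S := by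
    rintro _ ⟨m, hm, rfl⟩
    rw [Set.mem_Icc] at hm
    refine ⟨w_isRun k m hm.1 (by omega), ?_⟩
    rw [w_minPeriod k m hm.1 (by omega)]
    omega
  have hinj : Set.InjOn (fun m => (2*m, 4*k+1-2*m)) (Set.Icc 1 (k - p/2)) := by
    intro a _ b _ h
    simp only [Prod.mk.injEq] at h
    omega
  calc k - p / 2 = (Set.Icc 1 (k - p/2)).ncard := by
        rw [← Finset.coe_Icc, Set.ncard_coe_finset, Nat.card_Icc]; omega
    _ = ((fun m => (2*m, 4*k+1-2*m)) '' (Set.Icc 1 (k - p/2))).ncard :=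
        (Set.ncard_image_of_injOn hinj).symm
    _ ≤ S.ncard := Set.ncard_le_ncard hsub hfin
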